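/- Let n, m ≥ 1, let f̂ : ℝⁿ → ℝ be continuously differentiable, let B be a real m × n matrix, let λ > 0, and let 0 < p < 1. Define f(x) = f̂(x) + λ Σ_{i=1}^m |(Bx)_i|^p and f̃(x, μ) = f̂(x) + λ Σ_{i=1}^m s_μ((Bx)_i)^p for μ > 0. Then f̃ is a smoothing function of f: for every μ > 0 the map x ↦ f̃(x, μ) is continuously differentiable on ℝⁿ, and |f̃(x, μ) − f(x)| ≤ λ m (μ/4)^p for all x ∈ ℝⁿ and μ > 0. -/

import Mathlib

open Filter Topology

/-- The uniform smoothing function of the absolute value: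
`s_μ(t) = |t|` if `|t| ≥ μ/2`, and `s_μ(t) = t²/μ + μ/4` if `|t| < μ/2`. -/
noncomputable def sMu (μ t : ℝ) : ℝ := if μ / 2 ≤ |t| then |t| else t ^ 2 / μ + μ / 4


lemma sMu_hasDerivAt {μ : ℝ} (hμ : 0 < μ) (t : ℝ) :
    HasDerivAt (sMu μ) (max (-1) (min 1 (2 * t / μ))) t := by
  have hμ2 : 0 < μ / 2 := by linarith
  have hkey : (μ / 2) ^ 2 / μ + μ / 4 = μ / 2 := by field_simp; ring
  have hkeyn : (-(μ / 2)) ^ 2 / μ + μ / 4 = μ / 2 := by rw [neg_pow]; simpa using hkey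
  have hquad : ∀ s : ℝ, HasDerivAt (fun s : ℝ => s ^ 2 / μ + μ / 4) (2 * s / μ) s := by
    intro s
    have h1 : HasDerivAt (fun s : ℝ => s ^ 2) (2 * s) s := by
      simpa using hasDerivAt_pow 2 s
    simpa [mul_comm, mul_div_assoc] using (h1.div_const μ).add_const (μ / 4)
  rcases lt_trichotomy t (μ / 2) with h1 | h1 | h1
  · rcases lt_trichotomy t (-(μ / 2)) with h2 | h2 | h2
    · -- t < -μ/2
      have hval : max (-1 : ℝ) (min 1 (2 * t / μ)) = -1 := by
        have : 2 * t / μ < -1 := by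
          rw [div_lt_iff₀ hμ]; linarith
        rw [min_eq_right (by linarith), max_eq_left (by linarith)]
      have hev : sMu μ =ᶠ[𝓝 t] fun s => -s := by
        filter_upwards [eventually_lt_nhds h2] with s hs
        have habs : |s| = -s := abs_of_neg (by linarith)
        simp [sMu, habs, le_of_lt (by linarith : μ / 2 < -s)]
      rw [hval]
      exact (hasDerivAt_neg t).congr_of_eventuallyEq hev
    · -- t = -μ/2, gluing
      subst h2
      have hval : max (-1 : ℝ) (min 1 (2 * (-(μ / 2)) / μ)) = -1 := by
        have : 2 * (-(μ / 2)) / μ = -1 := by field_simp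
        rw [this]; simp
      rw [hval]
      have habsp : |(-(μ / 2))| = μ / 2 := by rw [abs_neg, abs_of_pos hμ2]
      have hleft : HasDerivWithinAt (sMu μ) (-1) (Set.Iic (-(μ / 2))) (-(μ / 2)) := by
        have hd : HasDerivWithinAt (fun s : ℝ => -s) (-1) (Set.Iic (-(μ / 2))) (-(μ / 2)) :=
          (hasDerivAt_neg _).hasDerivWithinAt
        refine hd.congr (fun s hs => ?_) ?_
        · have hs' : s ≤ -(μ / 2) := hs
          have habs : |s| = -s := abs_of_nonpos (by linarith)
          simp [sMu, habs, (by linarith : μ / 2 ≤ -s)]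
        · simp [sMu, habsp]
      have hright : HasDerivWithinAt (sMu μ) (-1) (Set.Ici (-(μ / 2))) (-(μ / 2)) := by
        have hd2 : 2 * (-(μ / 2)) / μ = -1 := by field_simp
        have hd := (hquad (-(μ / 2))).hasDerivWithinAt (s := Set.Ici (-(μ / 2)))
        rw [hd2] at hd
        refine hd.congr_of_eventuallyEq ?_ ?_
        · filter_upwards [eventually_nhdsWithin_of_eventually_nhds
            (eventually_lt_nhds (by linarith : -(μ / 2) < μ / 2)),
            self_mem_nhdsWithin] with s hs hs'
          have hs'' : -(μ / 2) ≤ s := hs'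
          rcases eq_or_lt_of_le hs'' with h | h
          · rw [← h]
            show sMu μ (-(μ / 2)) = (-(μ / 2)) ^ 2 / μ + μ / 4
            rw [hkeyn]
            simp [sMu, habsp]
          · have habs : |s| < μ / 2 := abs_lt.2 ⟨by linarith, hs⟩
            simp [sMu, not_le.2 habs]
        · show sMu μ (-(μ / 2)) = (-(μ / 2)) ^ 2 / μ + μ / 4
          rw [hkeyn]
          simp [sMu, habsp]
      have := hleft.union hright
      rwa [Set.Iic_union_Ici, hasDerivWithinAt_univ] at this
    · -- -μ/2 < t < μ/2
      have habs : |t| < μ / 2 := abs_lt.2 ⟨h2, h1⟩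
      have hval : max (-1 : ℝ) (min 1 (2 * t / μ)) = 2 * t / μ := by
        have hu : 2 * t / μ < 1 := by rw [div_lt_iff₀ hμ]; linarith
        have hl : (-1 : ℝ) < 2 * t / μ := by rw [lt_div_iff₀ hμ]; linarith
        rw [min_eq_right hu.le, max_eq_right hl.le]
      rw [hval]
      have hev : sMu μ =ᶠ[𝓝 t] fun s => s ^ 2 / μ + μ / 4 := by
        have : ∀ᶠ s in 𝓝 t, |s| < μ / 2 :=
          (continuous_abs.continuousAt).eventually_lt continuousAt_const habs
        filter_upwards [this] with s hs
        simp [sMu, not_le.2 hs]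
      exact (hquad t).congr_of_eventuallyEq hev
  · -- t = μ/2, gluing
    subst h1
    have hval : max (-1 : ℝ) (min 1 (2 * (μ / 2) / μ)) = 1 := by
      have : 2 * (μ / 2) / μ = 1 := by field_simp
      rw [this]; simp
    rw [hval]
    have habsp : |(μ / 2)| = μ / 2 := abs_of_pos hμ2
    have hright : HasDerivWithinAt (sMu μ) 1 (Set.Ici (μ / 2)) (μ / 2) := by
      have hd : HasDerivWithinAt (fun s : ℝ => s) 1 (Set.Ici (μ / 2)) (μ / 2) :=
        (hasDerivAt_id _).hasDerivWithinAt
      refine hd.congr (fun s hs => ?_) ?_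
      · have hs' : μ / 2 ≤ s := hs
        have habs : |s| = s := abs_of_pos (by linarith)
        simp [sMu, habs, hs']
      · simp [sMu, habsp]
    have hleft : HasDerivWithinAt (sMu μ) 1 (Set.Iic (μ / 2)) (μ / 2) := by
      have hd2 : 2 * (μ / 2) / μ = 1 := by field_simp
      have hd := (hquad (μ / 2)).hasDerivWithinAt (s := Set.Iic (μ / 2))
      rw [hd2] at hd
      refine hd.congr_of_eventuallyEq ?_ ?_
      · filter_upwards [eventually_nhdsWithin_of_eventually_nhds
          (eventually_gt_nhds (by linarith : -(μ / 2) < μ / 2)),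
          self_mem_nhdsWithin] with s hs hs'
        have hs'' : s ≤ μ / 2 := hs'
        rcases eq_or_lt_of_le hs'' with h | h
        · rw [h]
          show sMu μ (μ / 2) = (μ / 2) ^ 2 / μ + μ / 4
          rw [hkey]
          simp [sMu, habsp]
        · have habs : |s| < μ / 2 := abs_lt.2 ⟨hs, h⟩
          simp [sMu, not_le.2 habs]
      · show sMu μ (μ / 2) = (μ / 2) ^ 2 / μ + μ / 4
        rw [hkey]
        simp [sMu, habsp]
    have := hleft.union hright
    rwa [Set.Iic_union_Ici, hasDerivWithinAt_univ] at this
  · -- t > μ/2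
    have hval : max (-1 : ℝ) (min 1 (2 * t / μ)) = 1 := by
      have : (1 : ℝ) < 2 * t / μ := by rw [lt_div_iff₀ hμ]; linarith
      rw [min_eq_left this.le]; simp
    rw [hval]
    have hev : sMu μ =ᶠ[𝓝 t] fun s => s := by
      filter_upwards [eventually_gt_nhds h1] with s hs
      have habs : |s| = s := abs_of_pos (by linarith)
      simp [sMu, habs, hs.le]
    exact (hasDerivAt_id t).congr_of_eventuallyEq hev

lemma sMu_pos {μ : ℝ} (hμ : 0 < μ) (t : ℝ) : μ / 4 ≤ sMu μ t := by
  unfold sMu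
  split_ifs with h
  · linarith
  · nlinarith [sq_nonneg t, div_nonneg (sq_nonneg t) hμ.le]

lemma abs_le_sMu {μ : ℝ} (hμ : 0 < μ) (t : ℝ) : |t| ≤ sMu μ t := by
  unfold sMu
  split_ifs with h
  · exact le_rfl
  · push_neg at h
    have h3 : |t| ≤ (t ^ 2 + μ ^ 2 / 4) / μ := by
      rw [le_div_iff₀ hμ]
      nlinarith [sq_abs t, sq_nonneg (|t| - μ / 2)]
    have h4 : (t ^ 2 + μ ^ 2 / 4) / μ = t ^ 2 / μ + μ / 4 := by field_simp
    linarith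

lemma sMu_sub_abs_le {μ : ℝ} (hμ : 0 < μ) (t : ℝ) : sMu μ t - |t| ≤ μ / 4 := by
  unfold sMu
  split_ifs with h
  · linarith
  · push_neg at h
    have h2 : t ^ 2 / μ ≤ |t| := by
      rw [div_le_iff₀ hμ]
      nlinarith [sq_abs t, abs_nonneg t]
    linarith

lemma real_rpow_add_le {a b p : ℝ} (ha : 0 ≤ a) (hb : 0 ≤ b) (hp : 0 ≤ p) (hp1 : p ≤ 1) :
    (a + b) ^ p ≤ a ^ p + b ^ p := by
  have h := NNReal.rpow_add_le_add_rpow (⟨a, ha⟩ : NNReal) (⟨b, hb⟩ : NNReal) hp hp1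
  exact_mod_cast h

lemma sMu_ne_zero {μ : ℝ} (hμ : 0 < μ) (t : ℝ) : sMu μ t ≠ 0 :=
  ne_of_gt (lt_of_lt_of_le (by linarith) (sMu_pos hμ t))

lemma contDiff_sMu_rpow {μ p : ℝ} (hμ : 0 < μ) (hp0 : 0 < p) :
    ContDiff ℝ 1 (fun t : ℝ => sMu μ t ^ p) := by
  have hder : ∀ t : ℝ, HasDerivAt (fun t => sMu μ t ^ p)
      (max (-1) (min 1 (2 * t / μ)) * p * sMu μ t ^ (p - 1)) t := fun t =>
    (sMu_hasDerivAt hμ t).rpow_const (Or.inl (sMu_ne_zero hμ t))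
  have hdiff : Differentiable ℝ (fun t : ℝ => sMu μ t ^ p) :=
    fun t => (hder t).differentiableAt
  rw [contDiff_one_iff_deriv]
  refine ⟨hdiff, ?_⟩
  have hdeq : deriv (fun t : ℝ => sMu μ t ^ p) =
      fun t => max (-1) (min 1 (2 * t / μ)) * p * sMu μ t ^ (p - 1) :=
    funext fun t => (hder t).deriv
  rw [hdeq]
  have hcs : Continuous (sMu μ) := by
    have : Differentiable ℝ (sMu μ) := fun t => (sMu_hasDerivAt hμ t).differentiableAt
    exact this.continuous
  exact ((continuous_const.max (continuous_const.min
    ((continuous_const.mul continuous_id).div_const μ))).mul continuous_const).mul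
    (hcs.rpow_const fun t => Or.inl (sMu_ne_zero hμ t))

/-- With `f̂ : ℝⁿ → ℝ` continuously differentiable, `B` an `m × n` real matrix, `λ > 0`,
and `0 < p < 1`, the function `f̃(x,μ) = f̂(x) + λ Σᵢ s_μ((Bx)ᵢ)ᵖ` is a smoothing
function of `f(x) = f̂(x) + λ Σᵢ |(Bx)ᵢ|ᵖ`: for every `μ > 0` the map `x ↦ f̃(x,μ)` is
continuously differentiable on `ℝⁿ`, and `|f̃(x,μ) − f(x)| ≤ λ m (μ/4)ᵖ` for all `x`
and all `μ > 0`. -/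
theorem smoothing_of_lp_model (n m : ℕ) (hn : 1 ≤ n) (hm : 1 ≤ m)
    (fhat : EuclideanSpace ℝ (Fin n) → ℝ) (hfhat : ContDiff ℝ 1 fhat)
    (B : Matrix (Fin m) (Fin n) ℝ)
    (lam : ℝ) (hlam : 0 < lam) (p : ℝ) (hp0 : 0 < p) (hp1 : p < 1) :
    (∀ μ > (0 : ℝ), ContDiff ℝ 1
      (fun x : EuclideanSpace ℝ (Fin n) =>
        fhat x + lam * ∑ i, sMu μ (B.mulVec x i) ^ p)) ∧
    ∀ (x : EuclideanSpace ℝ (Fin n)), ∀ μ > (0 : ℝ),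
      |(fhat x + lam * ∑ i, sMu μ (B.mulVec x i) ^ p) -
        (fhat x + lam * ∑ i, |B.mulVec x i| ^ p)| ≤ lam * m * (μ / 4) ^ p := by
  have hB : ∀ i : Fin m, ContDiff ℝ 1 (fun x : EuclideanSpace ℝ (Fin n) => B.mulVec x i) := by
    intro i
    have heq : (fun x : EuclideanSpace ℝ (Fin n) => B.mulVec x i) =
        fun x => ∑ j, B i j * (EuclideanSpace.proj j) x := by
      funext x
      simp [Matrix.mulVec, dotProduct, EuclideanSpace.proj]
    rw [heq]
    exact ContDiff.sum fun j _ => contDiff_const.mul (EuclideanSpace.proj (𝕜 := ℝ) j).contDiff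
  constructor
  · intro μ hμ
    exact hfhat.add (contDiff_const.mul (ContDiff.sum fun i _ =>
      (contDiff_sMu_rpow hμ hp0).comp (hB i)))
  · intro x μ hμ
    set t : Fin m → ℝ := fun i => B.mulVec x i with ht
    have hterm : ∀ i : Fin m, |t i| ^ p ≤ sMu μ (t i) ^ p ∧
        sMu μ (t i) ^ p - |t i| ^ p ≤ (μ / 4) ^ p := by
      intro i
      constructor
      · exact Real.rpow_le_rpow (abs_nonneg _) (abs_le_sMu hμ _) hp0.le
      · have hsplit : sMu μ (t i) = |t i| + (sMu μ (t i) - |t i|) := by ring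
        have h1 := real_rpow_add_le (abs_nonneg (t i))
          (sub_nonneg.2 (abs_le_sMu hμ (t i))) hp0.le hp1.le
        rw [← hsplit] at h1
        have h2 : (sMu μ (t i) - |t i|) ^ p ≤ (μ / 4) ^ p :=
          Real.rpow_le_rpow (sub_nonneg.2 (abs_le_sMu hμ _)) (sMu_sub_abs_le hμ _) hp0.le
        linarith
    have hrw : (fhat x + lam * ∑ i, sMu μ (t i) ^ p) -
        (fhat x + lam * ∑ i, |t i| ^ p) =
        lam * ∑ i, (sMu μ (t i) ^ p - |t i| ^ p) := by
      rw [Finset.sum_sub_distrib]; ring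
    rw [hrw, abs_mul, abs_of_pos hlam,
      abs_of_nonneg (Finset.sum_nonneg fun i _ => sub_nonneg.2 (hterm i).1)]
    have hsum : ∑ i, (sMu μ (t i) ^ p - |t i| ^ p) ≤ (m : ℝ) * (μ / 4) ^ p := by
      calc ∑ i, (sMu μ (t i) ^ p - |t i| ^ p) ≤ ∑ _i : Fin m, (μ / 4) ^ p :=
            Finset.sum_le_sum fun i _ => (hterm i).2
        _ = (m : ℝ) * (μ / 4) ^ p := by simp [Finset.sum_const, mul_comm]
    calc lam * ∑ i, (sMu μ (t i) ^ p - |t i| ^ p) ≤ lam * ((m : ℝ) * (μ / 4) ^ p) :=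
          mul_le_mul_of_nonneg_left hsum hlam.le
      _ = lam * m * (μ / 4) ^ p := by ring
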